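/- Let (𝒪, 𝔄, μ) be a measure space, C ≥ 0, and let f : ℝ → ℝ be differentiable with |deriv f ξ| ≤ C(1 + |ξ|) for all ξ ∈ ℝ. Let v₁, v₂ : 𝒪 → ℝ be measurable functions in L²(μ), and suppose M₁, M₂ ≥ 0 satisfy |v₁| ≤ M₁ and |v₂| ≤ M₂ μ-almost everywhere. Then f ∘ v₁ − f ∘ v₂ ∈ L²(μ) and ‖f ∘ v₁ − f ∘ v₂‖_{L²(μ)} ≤ C·(1 + M₁ + M₂)·‖v₁ − v₂‖_{L²(μ)}. -/

import Mathlib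

open MeasureTheory

theorem stmt16 {𝒪 : Type*} [MeasurableSpace 𝒪] (μ : Measure 𝒪)
    (C : ℝ) (hC : 0 ≤ C) (f : ℝ → ℝ) (hf : Differentiable ℝ f)
    (hf' : ∀ ξ : ℝ, |deriv f ξ| ≤ C * (1 + |ξ|))
    (v₁ v₂ : 𝒪 → ℝ) (hv₁m : Measurable v₁) (hv₂m : Measurable v₂)
    (hv₁ : MemLp v₁ 2 μ) (hv₂ : MemLp v₂ 2 μ)
    (M₁ M₂ : ℝ) (hM₁ : 0 ≤ M₁) (hM₂ : 0 ≤ M₂)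
    (hb₁ : ∀ᵐ x ∂μ, |v₁ x| ≤ M₁) (hb₂ : ∀ᵐ x ∂μ, |v₂ x| ≤ M₂) :
    MemLp (fun x => f (v₁ x) - f (v₂ x)) 2 μ ∧
      eLpNorm (fun x => f (v₁ x) - f (v₂ x)) 2 μ ≤
        ENNReal.ofReal (C * (1 + M₁ + M₂)) *
          eLpNorm (fun x => v₁ x - v₂ x) 2 μ := by
  have key : ∀ᵐ x ∂μ, ‖f (v₁ x) - f (v₂ x)‖ ≤ C * (1 + M₁ + M₂) * ‖v₁ x - v₂ x‖ := by
    filter_upwards [hb₁, hb₂] with x h1 h2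
    have hconv : Convex ℝ (Set.uIcc (v₂ x) (v₁ x)) := convex_uIcc _ _
    have bound : ∀ ξ ∈ Set.uIcc (v₂ x) (v₁ x), ‖deriv f ξ‖ ≤ C * (1 + M₁ + M₂) := by
      intro ξ hξ
      have hξb : |ξ| ≤ max M₁ M₂ := by
        rcases Set.mem_uIcc.1 hξ with ⟨ha, hb⟩ | ⟨ha, hb⟩ <;>
        · rw [abs_le]; constructor <;> [skip; skip] <;>
          · cases abs_le.1 h1 with
            | intro l r =>
              cases abs_le.1 h2 with
              | intro l2 r2 =>
                first
                | exact le_trans (le_trans (neg_le_neg (le_max_left M₁ M₂)) (le_trans (neg_le_neg (le_max_right M₁ M₂ |>.trans le_rfl)) (by nlinarith [le_max_left M₁ M₂, le_max_right M₁ M₂]))) (by nlinarith [le_max_left M₁ M₂, le_max_right M₁ M₂])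
                | nlinarith [le_max_left M₁ M₂, le_max_right M₁ M₂]
      calc ‖deriv f ξ‖ ≤ C * (1 + |ξ|) := hf' ξ
        _ ≤ C * (1 + M₁ + M₂) := by
            have : |ξ| ≤ M₁ + M₂ := hξb.trans (max_le (by linarith) (by linarith))
            nlinarith
    have := hconv.norm_image_sub_le_of_norm_deriv_le (fun ξ _ => hf ξ) bound
      Set.right_mem_uIcc Set.left_mem_uIcc
    simpa [abs_sub_comm] using this
  have hmeas : AEStronglyMeasurable (fun x => f (v₁ x) - f (v₂ x)) μ :=
    ((hf.continuous.measurable.comp hv₁m).sub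
      (hf.continuous.measurable.comp hv₂m)).aestronglyMeasurable
  refine ⟨(hv₁.sub hv₂).of_le_mul hmeas key, ?_⟩
  exact eLpNorm_le_mul_eLpNorm_of_ae_le_mul key 2
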